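/- If a linear order L is 2-entangled (i.e., for every uncountable family F of injective, pairwise disjoint pairs (x₀,x₁) with x₀ < x₁ of elements of L and every t ∈ 2², there are two distinct pairs in F realizing t), then L has the countable chain condition: every family of pairwise disjoint nonempty open intervals of L is countable. -/

import Mathlib

open Cardinal

/-- Two `n`-tuples `e, e'` realize the binary tuple `t` if the comparison pattern
`(e'ᵢ < eᵢ)ᵢ` equals `t` or its bitwise negation. -/
def Realizes {L : Type*} [LinearOrder L] {n : ℕ} (t : Fin n → Bool) (e e' : Fin n → L) : Prop :=
  (∀ i, t i = true ↔ e' i < e i) ∨ (∀ i, t i = true ↔ e i < e' i)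

/-- `L` is 2-entangled: every uncountable family of injective, pairwise disjoint
increasing pairs realizes every `t ∈ 2²`. -/
def TwoEntangledInc (L : Type*) [LinearOrder L] : Prop :=
  ∀ F : Set (Fin 2 → L), ¬F.Countable →
    (∀ e ∈ F, Function.Injective e) →
    (∀ e ∈ F, e 0 < e 1) →
    (F.Pairwise fun e e' => ∀ i j, e i ≠ e' j) →
    ∀ t : Fin 2 → Bool, ∃ e ∈ F, ∃ e' ∈ F, e ≠ e' ∧ Realizes t e e'

/-- A 2-entangled linear order is ccc: every family of pairwise disjoint nonempty
open intervals is countable. -/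
theorem twoEntangled_ccc (L : Type*) [LinearOrder L] (hL : TwoEntangledInc L)
    (I : Set (Set L))
    (hint : ∀ s ∈ I, ∃ a b : L, s = Set.Ioo a b)
    (hne : ∀ s ∈ I, s.Nonempty)
    (hdisj : I.Pairwise fun s s' => Disjoint s s') :
    I.Countable := by
  by_contra hc
  -- choose endpoints and a witness point for every interval
  choose a b hab using fun s : ↥I => hint s s.2
  choose x hx using fun s : ↥I => hne s s.2
  have hmem : ∀ s : ↥I, a s < x s ∧ x s < b s := by
    intro s
    have := hx s
    rw [hab s] at this
    exact this
  have hd : ∀ s s' : ↥I, s ≠ s' → ∀ y : L, y ∈ (s : Set L) → y ∉ (s' : Set L) := by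
    intro s s' hss y hy hy'
    have hne' : (s : Set L) ≠ (s' : Set L) := fun h => hss (Subtype.ext h)
    exact (hdisj s.2 s'.2 hne').le_bot ⟨hy, hy'⟩
  -- a is injective (on distinct intervals)
  have inj_x : ∀ s s' : ↥I, s ≠ s' → x s ≠ x s' := by
    intro s s' hss h
    exact hd s s' hss (x s) (hx s) (h ▸ hx s')
  have inj_a : ∀ s s' : ↥I, s ≠ s' → a s ≠ a s' := by
    intro s s' hss h
    have h1 : x s' ∉ (s : Set L) := fun hm => hd s s' hss (x s') hm (hx s')
    rw [hab s] at h1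
    have hx1 : a s < x s' := h ▸ (hmem s').1
    have hbs : b s ≤ x s' := by
      by_contra hlt
      exact h1 ⟨hx1, not_le.mp hlt⟩
    have h2 : x s ∉ (s' : Set L) := hd s s' hss (x s) (hx s)
    rw [hab s'] at h2
    have hx2 : a s' < x s := h ▸ (hmem s).1
    have hbs' : b s' ≤ x s := by
      by_contra hlt
      exact h2 ⟨hx2, not_le.mp hlt⟩
    exact absurd (((hmem s).2.trans_le hbs).trans ((hmem s').2.trans_le hbs'))
      (lt_irrefl _)
  -- key: no "nesting" pattern
  have key : ∀ s s' : ↥I, s ≠ s' → a s < a s' → x s' < x s → False := by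
    intro s s' hss h1 h2
    have : x s' ∈ (s : Set L) := by
      rw [hab s]
      exact ⟨h1.trans (hmem s').1, h2.trans (hmem s).2⟩
    exact hd s s' hss (x s') this (hx s')
  -- thin out to a pairwise "non-conflicting" uncountable subfamily via Zorn
  set S : Set (Set ↥I) :=
    {T | T.Pairwise fun s s' => a s ≠ x s' ∧ a s' ≠ x s} with hS
  obtain ⟨T, hTS, hTmax⟩ := zorn_subset S (by
    intro c hcS hchain
    refine ⟨⋃₀ c, ?_, fun t ht => Set.subset_sUnion_of_mem ht⟩
    intro s hs s' hs' hss
    obtain ⟨t1, ht1, hst1⟩ := hs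
    obtain ⟨t2, ht2, hst2⟩ := hs'
    rcases eq_or_ne t1 t2 with rfl | hne12
    · exact hcS ht1 hst1 hst2 hss
    · rcases hchain ht1 ht2 hne12 with h | h
      · exact hcS ht2 (h hst1) hst2 hss
      · exact hcS ht1 hst1 (h hst2) hss)
  -- T is uncountable
  have hTunc : ¬ T.Countable := by
    intro hTc
    have hcover : (Set.univ : Set ↥I) ⊆
        T ∪ ⋃ t ∈ T, ({s : ↥I | a s = x t} ∪ {s : ↥I | a t = x s}) := by
      intro s _
      by_contra hs
      rw [Set.mem_union] at hs
      push_neg at hs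
      obtain ⟨hsT, hsU⟩ := hs
      have hins : insert s T ∈ S := by
        rw [hS, Set.mem_setOf_eq, Set.pairwise_insert]
        refine ⟨hTS, fun t ht hst => ?_⟩
        have : s ∉ ({s' : ↥I | a s' = x t} ∪ {s' : ↥I | a t = x s'}) := by
          intro hmem'
          exact hsU (Set.mem_biUnion ht hmem')
        rw [Set.mem_union] at this
        push_neg at this
        simp only [Set.mem_setOf_eq] at this
        exact ⟨⟨this.1, this.2⟩, ⟨this.2, this.1⟩⟩
      have : insert s T ⊆ T := hTmax hins (Set.subset_insert s T)
      exact hsT (this (Set.mem_insert s T))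
    have hcnt : (T ∪ ⋃ t ∈ T, ({s : ↥I | a s = x t} ∪ {s : ↥I | a t = x s})).Countable := by
      refine hTc.union (Set.Countable.biUnion hTc fun t _ => Set.Countable.union ?_ ?_)
      · apply Set.Subsingleton.countable
        intro s1 h1 s2 h2
        by_contra hne12
        exact inj_a s1 s2 hne12 (h1.trans h2.symm)
      · apply Set.Subsingleton.countable
        intro s1 h1 s2 h2
        by_contra hne12
        exact inj_x s1 s2 hne12 (h1.symm.trans h2)
    have : (Set.univ : Set ↥I).Countable := hcnt.mono hcover
    exact hc (Set.countable_coe_iff.mp (Set.countable_univ_iff.mp this))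
  -- the family of pairs
  set p : ↥I → (Fin 2 → L) := fun s => ![a s, x s] with hp
  have hpinj : Set.InjOn p T := by
    intro s _ s' _ h
    by_contra hss
    exact inj_x s s' hss (congrFun h 1)
  set F : Set (Fin 2 → L) := p '' T with hF
  have hFunc : ¬ F.Countable := fun h =>
    hTunc (Set.countable_of_injective_of_countable_image hpinj h)
  have hFi : ∀ e ∈ F, Function.Injective e := by
    rintro e ⟨s, _, rfl⟩ i j hij
    have hij' : (![a s, x s] : Fin 2 → L) i = ![a s, x s] j := hij
    fin_cases i <;> fin_cases j <;>
      simp only [Matrix.cons_val_zero, Matrix.cons_val_one, Matrix.head_cons] at hij' <;>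
      first
        | rfl
        | exact absurd hij' (ne_of_lt (hmem s).1)
        | exact absurd hij' (ne_of_gt (hmem s).1)
  have hFlt : ∀ e ∈ F, e 0 < e 1 := by
    rintro e ⟨s, _, rfl⟩
    simpa [hp] using (hmem s).1
  have hFpw : F.Pairwise fun e e' => ∀ i j, e i ≠ e' j := by
    rintro e ⟨s, hs, rfl⟩ e' ⟨s', hs', rfl⟩ hne' i j
    have hss : s ≠ s' := by rintro rfl; exact hne' rfl
    have hconf := hTS hs hs' hss
    show (![a s, x s] : Fin 2 → L) i ≠ ![a s', x s'] j
    fin_cases i <;> fin_cases j <;>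
      simp only [Matrix.cons_val_zero, Matrix.cons_val_one, Matrix.head_cons]
    · exact inj_a s s' hss
    · exact hconf.1
    · exact fun h => hconf.2 h.symm
    · exact inj_x s s' hss
  obtain ⟨e, ⟨s, hs, rfl⟩, e', ⟨s', hs', rfl⟩, hne', hreal⟩ :=
    hL F hFunc hFi hFlt hFpw ![false, true]
  have hss : s ≠ s' := by rintro rfl; exact hne' rfl
  rcases hreal with h | h
  · have h0 := h 0
    have h1 := h 1
    simp [hp] at h0 h1
    have : a s < a s' := lt_of_le_of_ne h0 (inj_a s s' hss)
    exact key s s' hss this h1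
  · have h0 := h 0
    have h1 := h 1
    simp [hp] at h0 h1
    have : a s' < a s := lt_of_le_of_ne h0 (inj_a s' s (Ne.symm hss))
    exact key s' s (Ne.symm hss) this h1
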